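/- Existence and uniqueness of the compatible connection (Lemma of Section 6): suppose the axial function α on Γ is 3-independent and satisfies axiom (A3) in the following form: for every oriented edge e, the images in the quotient group ℚ^n/ℤα_e of the multiset {α_{e'} : e' ∈ E_{i(e)}} and of the multiset {α_{e''} : e'' ∈ E_{t(e)}} coincide as multisets. Then there exists a unique connection ∇ on Γ compatible with α. -/
import Mathlib


open MvPolynomial TensorProduct

/-- A graph with an axial function: finite sets of vertices and oriented edges,
initial/terminal maps, a fixed-point-free orientation-reversing involution, and
weights `w e ∈ ℤ^n` with `w e ≠ 0` and `w (rev e) = - w e`. -/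
structure GKMGraph (n : ℕ) where
  V : Type
  E : Type
  fintV : Fintype V
  fintE : Fintype E
  i : E → V
  t : E → V
  rev : E → E
  rev_rev : ∀ e, rev (rev e) = e
  rev_ne : ∀ e, rev e ≠ e
  i_rev : ∀ e, i (rev e) = t e
  t_rev : ∀ e, t (rev e) = i e
  w : E → Fin n → ℤ
  w_ne : ∀ e, w e ≠ 0
  w_rev : ∀ e, w (rev e) = - w e

attribute [instance] GKMGraph.fintV GKMGraph.fintE

/-- The weight `a ∈ ℤ^n` regarded as the linear form `a₁x₁ + ⋯ + aₙxₙ ∈ ℝ[x₁,…,xₙ]`. -/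
noncomputable def wtPoly {n : ℕ} (a : Fin n → ℤ) : MvPolynomial (Fin n) ℝ :=
  ∑ j, MvPolynomial.C (a j : ℝ) * MvPolynomial.X j

/-- The weight of an edge regarded as a vector in `ℚ^n`. -/
def GKMGraph.wQ {n : ℕ} (G : GKMGraph n) (e : G.E) : Fin n → ℚ :=
  fun j => (G.w e j : ℚ)

/-- `Γ` is `d`-valent: every vertex has exactly `d` outgoing oriented edges. -/
def GKMGraph.Valent {n : ℕ} (G : GKMGraph n) (d : ℕ) : Prop :=
  ∀ p : G.V, {e : G.E | G.i e = p}.ncard = d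

/-- The axial function is 2-independent: the weights of any two distinct edges
issuing from the same vertex are `ℚ`-linearly independent. -/
def GKMGraph.TwoIndep {n : ℕ} (G : GKMGraph n) : Prop :=
  ∀ e e' : G.E, G.i e = G.i e' → e ≠ e' →
    LinearIndependent ℚ ![G.wQ e, G.wQ e']

/-- `nab` is a connection on `Γ`: for each oriented edge `e` it gives a bijection
`∇_e : E_{i(e)} → E_{t(e)}` with `∇_{ē} = (∇_e)⁻¹`.  (Values of `nab e` outside
`E_{i(e)}` are irrelevant.) -/
def GKMGraph.IsConnection {n : ℕ} (G : GKMGraph n) (nab : G.E → G.E → G.E) : Prop :=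
  (∀ e : G.E, Set.BijOn (nab e) {e' | G.i e' = G.i e} {e'' | G.i e'' = G.t e}) ∧
  (∀ e e' : G.E, G.i e' = G.i e → nab (G.rev e) (nab e e') = e')

/-- The connection `nab` is compatible with the axial function: for every edge `e`
and every `e' ∈ E_{i(e)}`, the difference `α_{∇_e e'} - α_{e'}` is an integer
multiple of `α_e`. -/
def GKMGraph.Compatible {n : ℕ} (G : GKMGraph n) (nab : G.E → G.E → G.E) : Prop :=
  ∀ e e' : G.E, G.i e' = G.i e → ∃ m : ℤ, G.w (nab e e') = G.w e' + m • G.w e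

/-- The pairing `⟨α_e, ξ⟩` of the weight of an edge with a vector `ξ ∈ ℝ^n`. -/
noncomputable def GKMGraph.pairing {n : ℕ} (G : GKMGraph n) (e : G.E) (ξ : Fin n → ℝ) : ℝ :=
  ∑ j, (G.w e j : ℝ) * ξ j

/-- `ξ ∈ ℝ^n` is generic if `⟨α_e, ξ⟩ ≠ 0` for every edge `e`. -/
def GKMGraph.Generic {n : ℕ} (G : GKMGraph n) (ξ : Fin n → ℝ) : Prop :=
  ∀ e : G.E, G.pairing e ξ ≠ 0

/-- `σ_p(ξ)`: the number of edges issuing from `p` with `⟨α_e, ξ⟩ < 0`. -/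
noncomputable def GKMGraph.sigma {n : ℕ} (G : GKMGraph n) (p : G.V) (ξ : Fin n → ℝ) : ℕ :=
  {e : G.E | G.i e = p ∧ G.pairing e ξ < 0}.ncard

/-- The combinatorial Betti number `β_k(Γ;ξ) = #{p ∈ V : σ_p(ξ) = k}`. -/
noncomputable def GKMGraph.betti {n : ℕ} (G : GKMGraph n) (ξ : Fin n → ℝ) (k : ℕ) : ℕ :=
  {p : G.V | G.sigma p ξ = k}.ncard

open scoped Classical

/-- The axial function is 3-independent: for every vertex `p`, the weights of any
(at most three) distinct edges issuing from `p` are `ℚ`-linearly independent. -/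
def GKMGraph.ThreeIndep {n : ℕ} (G : GKMGraph n) : Prop :=
  ∀ p : G.V, ∀ s : Finset G.E, (∀ e ∈ s, G.i e = p) → s.card ≤ 3 →
    LinearIndependent ℚ (fun e : s => G.wQ e)

/-- Axiom (A3) in multiset form: for every oriented edge `e`, the multiset of images
in `ℚ^n/ℤα_e` of the weights of the edges issuing from `i(e)` coincides with the
corresponding multiset for `t(e)`. -/
def GKMGraph.AxiomA3 {n : ℕ} (G : GKMGraph n) : Prop :=
  ∀ e : G.E,
    Multiset.map
      (fun e' => Submodule.Quotient.mk (p := Submodule.span ℤ {G.wQ e}) (G.wQ e'))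
      (Finset.univ.filter (fun e' => G.i e' = G.i e)).val =
    Multiset.map
      (fun e'' => Submodule.Quotient.mk (p := Submodule.span ℤ {G.wQ e}) (G.wQ e''))
      (Finset.univ.filter (fun e'' => G.i e'' = G.t e)).val

namespace GKMAux

variable {n : ℕ} (G : GKMGraph n)

/-- `x - y` is an integer multiple of the weight of `e` (over `ℚ`). -/
def Rel (e x y : G.E) : Prop := ∃ m : ℤ, G.wQ x - G.wQ y = (m : ℚ) • G.wQ e

variable {G}

lemma wQ_rev (e : G.E) : G.wQ (G.rev e) = - G.wQ e := by
  funext j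
  simp [GKMGraph.wQ, G.w_rev e]

lemma rel_symm {e x y : G.E} (h : Rel G e x y) : Rel G e y x := by
  obtain ⟨m, hm⟩ := h
  exact ⟨-m, by push_cast; rw [neg_smul, ← hm]; abel⟩

lemma rel_trans {e x y z : G.E} (h : Rel G e x y) (h' : Rel G e y z) : Rel G e x z := by
  obtain ⟨m, hm⟩ := h; obtain ⟨m', hm'⟩ := h'
  refine ⟨m + m', ?_⟩
  have : G.wQ x - G.wQ z = (G.wQ x - G.wQ y) + (G.wQ y - G.wQ z) := by abel
  rw [this, hm, hm', ← add_smul]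
  push_cast; ring_nf

lemma rel_rev {e x y : G.E} (h : Rel G (G.rev e) x y) : Rel G e x y := by
  obtain ⟨m, hm⟩ := h
  refine ⟨-m, ?_⟩
  rw [hm, wQ_rev]
  push_cast
  rw [smul_neg, neg_smul]

lemma inj_at (h3 : G.ThreeIndep) (f : G.E) {x y : G.E}
    (hx : G.i x = G.i f) (hy : G.i y = G.i f) (c : ℚ)
    (h : G.wQ x - G.wQ y = c • G.wQ f) : x = y := by
  by_contra hne
  classical
  set s : Finset G.E := {f, x, y} with hs
  have hxs : x ∈ s := by simp [hs]
  have hys : y ∈ s := by simp [hs]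
  have hfs : f ∈ s := by simp [hs]
  have hmem : ∀ e ∈ s, G.i e = G.i f := by
    intro e he
    simp only [hs, Finset.mem_insert, Finset.mem_singleton] at he
    rcases he with rfl | rfl | rfl <;> simp [hx, hy]
  have hcard : s.card ≤ 3 := by
    refine le_trans (Finset.card_insert_le _ _) ?_
    refine Nat.succ_le_succ (le_trans (Finset.card_insert_le _ _) ?_)
    simp
  have li := h3 (G.i f) s hmem hcard
  set g : G.E → ℚ := fun z =>
    (if z = x then 1 else 0) - (if z = y then 1 else 0) - (if z = f then c else 0) with hg
  have hsum : ∑ z ∈ s, g z • G.wQ z = 0 := by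
    simp only [hg, sub_smul, ite_smul, one_smul, zero_smul, Finset.sum_sub_distrib,
      Finset.sum_ite_eq', hxs, hys, hfs, if_true]
    rw [sub_sub, ← h]
    abel
  have hzero := Fintype.linearIndependent_iff.mp li (fun z : s => g z) ?_
  · by_cases hxf : x = f
    · have hyf : y ≠ f := fun hyf => hne (hxf.trans hyf.symm)
      have := hzero ⟨y, hys⟩
      simp [hg, hyf, (show y ≠ x from fun hh => hne hh.symm)] at this
    · have := hzero ⟨x, hxs⟩
      simp [hg, hne, hxf] at this
  · rw [← hsum]
    exact Finset.sum_coe_sort s (fun z => g z • G.wQ z)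

lemma eq_of_rel_i (h3 : G.ThreeIndep) {e x y : G.E}
    (hx : G.i x = G.i e) (hy : G.i y = G.i e) (h : Rel G e x y) : x = y := by
  obtain ⟨m, hm⟩ := h
  exact inj_at h3 e hx hy (m : ℚ) hm

lemma eq_of_rel_t (h3 : G.ThreeIndep) {e x y : G.E}
    (hx : G.i x = G.t e) (hy : G.i y = G.t e) (h : Rel G e x y) : x = y := by
  obtain ⟨m, hm⟩ := h
  refine inj_at h3 (G.rev e) (by rw [hx, G.i_rev]) (by rw [hy, G.i_rev]) (-(m : ℚ)) ?_
  rw [hm, wQ_rev, smul_neg, neg_smul, neg_neg]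

/-- The class of the weight of `x` in `ℚ^n / ℤ·α_e`. -/
def qcl (G : GKMGraph n) (e x : G.E) :=
  Submodule.Quotient.mk (p := Submodule.span ℤ {G.wQ e}) (G.wQ x)

lemma rel_of_qcl {e x y : G.E} (h : qcl G e x = qcl G e y) : Rel G e x y := by
  rw [qcl, qcl, Submodule.Quotient.eq] at h
  obtain ⟨a, ha⟩ := Submodule.mem_span_singleton.1 h
  exact ⟨a, by rw [← ha, Int.cast_smul_eq_zsmul]⟩

lemma rel_of_w {e x y : G.E} {m : ℤ} (h : G.w x = G.w y + m • G.w e) : Rel G e x y := by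
  refine ⟨m, funext fun j => ?_⟩
  have hj := congrFun h j
  simp only [Pi.add_apply, Pi.smul_apply, smul_eq_mul] at hj
  simp only [Pi.sub_apply, Pi.smul_apply, smul_eq_mul, GKMGraph.wQ]
  push_cast [hj]
  ring

lemma w_of_rel {e x y : G.E} (h : Rel G e x y) : ∃ m : ℤ, G.w x = G.w y + m • G.w e := by
  obtain ⟨m, hm⟩ := h
  refine ⟨m, funext fun j => ?_⟩
  have hj := congrFun hm j
  simp only [Pi.sub_apply, Pi.smul_apply, smul_eq_mul, GKMGraph.wQ] at hj
  have : (G.w x j : ℚ) = G.w y j + m * G.w e j := by linarith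
  simp only [Pi.add_apply, Pi.smul_apply, smul_eq_mul]
  exact_mod_cast this

lemma exists_forward (hA3 : G.AxiomA3) (e e' : G.E) (h : G.i e' = G.i e) :
    ∃ e'', G.i e'' = G.t e ∧ qcl G e e'' = qcl G e e' := by
  classical
  have hmem : qcl G e e' ∈ Multiset.map
      (fun e'' => Submodule.Quotient.mk (p := Submodule.span ℤ {G.wQ e}) (G.wQ e''))
      (Finset.univ.filter (fun e'' => G.i e'' = G.t e)).val := by
    rw [← hA3 e]
    exact Multiset.mem_map.2 ⟨e', by simp [h], rfl⟩
  obtain ⟨e'', hm, he⟩ := Multiset.mem_map.1 hmem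
  exact ⟨e'', by simpa using (Finset.mem_filter.1 hm).2, he⟩

lemma exists_backward (hA3 : G.AxiomA3) (e e'' : G.E) (h : G.i e'' = G.t e) :
    ∃ e', G.i e' = G.i e ∧ qcl G e e' = qcl G e e'' := by
  classical
  have hmem : qcl G e e'' ∈ Multiset.map
      (fun e' => Submodule.Quotient.mk (p := Submodule.span ℤ {G.wQ e}) (G.wQ e'))
      (Finset.univ.filter (fun e' => G.i e' = G.i e)).val := by
    rw [hA3 e]
    exact Multiset.mem_map.2 ⟨e'', by simp [h], rfl⟩
  obtain ⟨e', hm, he⟩ := Multiset.mem_map.1 hmem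
  exact ⟨e', by simpa using (Finset.mem_filter.1 hm).2, he⟩

/-- The canonical connection: match edges by their classes mod `ℤ·α_e`. -/
noncomputable def nabAux (G : GKMGraph n) (e e' : G.E) : G.E :=
  if h : ∃ e'', G.i e'' = G.t e ∧ qcl G e e'' = qcl G e e' then h.choose else e'

lemma nab_spec (hA3 : G.AxiomA3) (e e' : G.E) (h : G.i e' = G.i e) :
    G.i (nabAux G e e') = G.t e ∧ Rel G e (nabAux G e e') e' := by
  have hex := exists_forward hA3 e e' h
  rw [nabAux, dif_pos hex]
  exact ⟨hex.choose_spec.1, rel_of_qcl hex.choose_spec.2⟩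

end GKMAux
/-- existence and uniqueness of the compatible connection.  If `α` is
3-independent and satisfies axiom (A3), then there is a connection on `Γ` compatible
with `α`, and it is unique (any two such agree on `E_{i(e)}` for every edge `e`). -/
theorem compatible_connection_exists_unique {n : ℕ} (G : GKMGraph n)
    (h3 : G.ThreeIndep) (hA3 : G.AxiomA3) :
    ∃ nab : G.E → G.E → G.E,
      (G.IsConnection nab ∧ G.Compatible nab) ∧
      ∀ nab' : G.E → G.E → G.E, G.IsConnection nab' → G.Compatible nab' →
        ∀ e e' : G.E, G.i e' = G.i e → nab e e' = nab' e e' := by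
  classical
  have spec : ∀ e e' : G.E, G.i e' = G.i e →
      G.i (GKMAux.nabAux G e e') = G.t e ∧ GKMAux.Rel G e (GKMAux.nabAux G e e') e' :=
    fun e e' h => GKMAux.nab_spec hA3 e e' h
  have conn1 : ∀ e : G.E, Set.BijOn (GKMAux.nabAux G e)
      {e' | G.i e' = G.i e} {e'' | G.i e'' = G.t e} := by
    intro e
    refine ⟨fun a ha => (spec e a ha).1, ?_, ?_⟩
    · intro a ha b hb hab
      have ra := (spec e a ha).2
      have rb := (spec e b hb).2
      exact GKMAux.eq_of_rel_i h3 ha hb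
        (GKMAux.rel_trans (GKMAux.rel_symm ra) (hab ▸ rb))
    · intro e'' he''
      obtain ⟨e', he', hq⟩ := GKMAux.exists_backward hA3 e e'' he''
      refine ⟨e', he', ?_⟩
      exact GKMAux.eq_of_rel_t h3 (spec e e' he').1 he''
        (GKMAux.rel_trans (spec e e' he').2 (GKMAux.rel_of_qcl hq))
  have conn2 : ∀ e e' : G.E, G.i e' = G.i e →
      GKMAux.nabAux G (G.rev e) (GKMAux.nabAux G e e') = e' := by
    intro e e' h
    have h1 := spec e e' h
    have h2 := spec (G.rev e) (GKMAux.nabAux G e e') (by rw [h1.1, G.i_rev])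
    have r : GKMAux.Rel G e (GKMAux.nabAux G (G.rev e) (GKMAux.nabAux G e e')) e' :=
      GKMAux.rel_trans (GKMAux.rel_rev h2.2) h1.2
    refine GKMAux.eq_of_rel_i h3 ?_ h r
    rw [h2.1, G.t_rev]
  have compat : G.Compatible (GKMAux.nabAux G) := by
    intro e e' h
    exact GKMAux.w_of_rel (spec e e' h).2
  refine ⟨GKMAux.nabAux G, ⟨⟨conn1, conn2⟩, compat⟩, ?_⟩
  intro nab' hc' hcp' e e' h
  have h1 := spec e e' h
  have h2 : G.i (nab' e e') = G.t e := (hc'.1 e).1 h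
  obtain ⟨m, hm⟩ := hcp' e e' h
  exact GKMAux.eq_of_rel_t h3 h1.1 h2
    (GKMAux.rel_trans h1.2 (GKMAux.rel_symm (GKMAux.rel_of_w hm)))
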